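/- Every set S of vertices of the graph B whose closed neighborhood N[S] contains all vertices of B except possibly a and b has at least 3 elements; that is, even when a and b are predominated, at least three vertices are needed to dominate B. -/

import Mathlib

namespace CDG

/-- Vertices of the graph `B`. -/
inductive BVert : Type
  | a | e | b | b' | h | k | f1 | g1 | f2 | g2

/-- The edges of the graph `B`. -/
def BRel : BVert → BVert → Prop
  | .a, .e => True
  | .e, .b => True
  | .b, .b' => True
  | .a, .h => True
  | .h, .e => True
  | .e, .f1 => True
  | .f1, .b => True
  | .b, .f2 => True
  | .f2, .e => True
  | .e, .g1 => True
  | .g1, .f1 => True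
  | .e, .g2 => True
  | .g2, .f2 => True
  | .h, .k => True
  | .k, .a => True
  | _, _ => False

/-- The graph `B`. -/
def graphB : SimpleGraph BVert := SimpleGraph.fromRel BRel

/-- `S` is a connected dominating set of `G`: every vertex is in `S` or adjacent to a
vertex of `S`, and the subgraph induced by `S` is connected. -/
def IsConnDomSet {V : Type*} (G : SimpleGraph V) (S : Set V) : Prop :=
  (∀ v : V, v ∈ S ∨ ∃ u ∈ S, G.Adj u v) ∧ (G.induce S).Connected

/-- The connected domination number of `G`. -/
noncomputable def connDomNum {V : Type*} (G : SimpleGraph V) : ℕ :=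
  sInf {m | ∃ S : Set V, IsConnDomSet G S ∧ S.ncard = m}

/-- Vertices of the graph `H n`: `u i` is `u_i` for `0 ≤ i ≤ n+1`, `x t` is `x_{t+1}` and
`y t` is `y_{t+1}` for `0 ≤ t ≤ n-2`. -/
inductive HVert (n : ℕ) : Type
  | u : Fin (n + 2) → HVert n
  | x : Fin (n - 1) → HVert n
  | y : Fin (n - 1) → HVert n

/-- The edges of the graph `H n`. -/
def HRel (n : ℕ) : HVert n → HVert n → Prop
  | .u i, .u j => (j : ℕ) = (i : ℕ) + 1
  | .u i, .x t => (i : ℕ) = (t : ℕ) + 1 ∨ (i : ℕ) = (t : ℕ) + 2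
  | .x t, .y s => t = s
  | .y s, .u i => (i : ℕ) = (s : ℕ) + 2
  | _, _ => False

/-- The graph `H n`. -/
def graphH (n : ℕ) : SimpleGraph (HVert n) := SimpleGraph.fromRel (HRel n)

/-- Vertices of the graph `C m`: `cc i` is `c^{i+1}` and `dd i` is `d^{i+1}` for `0 ≤ i ≤ m-1`. -/
inductive CVert (m : ℕ) : Type
  | c : CVert m
  | d : CVert m
  | cc : Fin m → CVert m
  | dd : Fin m → CVert m

/-- The edges of the graph `C m`. -/
def CRel (m : ℕ) : CVert m → CVert m → Prop
  | .c, .d => True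
  | .c, .dd _ => True
  | .cc i, .dd j => i = j
  | _, _ => False

/-- The graph `C m`. -/
def graphC (m : ℕ) : SimpleGraph (CVert m) := SimpleGraph.fromRel (CRel m)

/-- Vertices of the graph `A`. -/
inductive AVert : Type
  | p1 | p2 | p3 | q1 | q2 | r1 | r2

/-- The edges of the graph `A`. -/
def ARel : AVert → AVert → Prop
  | .p1, .p2 => True
  | .p2, .p3 => True
  | .p1, .q1 => True
  | .q1, .r1 => True
  | .p2, .q1 => True
  | .p2, .r1 => True
  | .p2, .q2 => True
  | .q2, .r2 => True
  | .p3, .q2 => True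
  | .p3, .r2 => True
  | _, _ => False

/-- Vertices of the graph `G_F`, for a formula with `k` variables and `n` clauses:
`k` copies of `B`, `n` copies of `C n`, one copy of `H (2n+7)`, and a copy of `A`
exactly when `k` is odd (realized as `AVert × Fin (k % 2)`). -/
abbrev GVert (k n : ℕ) : Type :=
  (Fin k × BVert) ⊕ (Fin n × CVert n) ⊕ HVert (2 * n + 7) ⊕ (AVert × Fin (k % 2))

/-- The edges of the graph `G_F`, where the formula `F` assigns to each clause `j`
the (nonempty) set of variables appearing in it. -/
def GRel (k n : ℕ) (F : Fin n → Finset (Fin k)) : GVert k n → GVert k n → Prop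
  | .inl (i, v), .inl (i', w) => i = i' ∧ BRel v w
  | .inr (.inl (j, v)), .inr (.inl (j', w)) => j = j' ∧ CRel n v w
  | .inr (.inr (.inl v)), .inr (.inr (.inl w)) => HRel (2 * n + 7) v w
  | .inr (.inr (.inr (v, _))), .inr (.inr (.inr (w, _))) => ARel v w
  | .inr (.inl (j, v)), .inl (i, w) =>
      i ∈ F j ∧ w = .a ∧ (v = .c ∨ ∃ t, v = .cc t)
  | .inr (.inr (.inl v)), .inl (i, w) =>
      v = .u ⟨0, by omega⟩ ∧ (w = .a ∨ w = .b)
  | .inr (.inr (.inr (v, _))), .inr (.inr (.inl w)) =>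
      v = .p1 ∧ w = .u ⟨0, by omega⟩
  | _, _ => False

/-- The graph `G_F`. -/
def graphGF (k n : ℕ) (F : Fin n → Finset (Fin k)) : SimpleGraph (GVert k n) :=
  SimpleGraph.fromRel (GRel k n F)

/-- Vertices of the graph `G'_F`, for a formula with `k` variables and `n` clauses:
`k` copies of `B`, `n` copies of `C n`, one copy of `H 6`, and a copy of `A`
exactly when `k` is odd (realized as `AVert × Fin (k % 2)`). -/
abbrev GVert' (k n : ℕ) : Type :=
  (Fin k × BVert) ⊕ (Fin n × CVert n) ⊕ HVert 6 ⊕ (AVert × Fin (k % 2))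

/-- The edges of the graph `G'_F`. -/
def GRel' (k n : ℕ) (F : Fin n → Finset (Fin k)) : GVert' k n → GVert' k n → Prop
  | .inl (i, v), .inl (i', w) => i = i' ∧ BRel v w
  | .inr (.inl (j, v)), .inr (.inl (j', w)) => j = j' ∧ CRel n v w
  | .inr (.inr (.inl v)), .inr (.inr (.inl w)) => HRel 6 v w
  | .inr (.inr (.inr (v, _))), .inr (.inr (.inr (w, _))) => ARel v w
  | .inr (.inl (j, v)), .inl (i, w) =>
      i ∈ F j ∧ w = .a ∧ (v = .c ∨ ∃ t, v = .cc t)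
  | .inr (.inr (.inl v)), .inl (i, w) =>
      v = .u ⟨7, by omega⟩ ∧ (w = .a ∨ w = .b)
  | .inr (.inr (.inr (v, _))), .inr (.inr (.inl w)) =>
      v = .p1 ∧ w = .u ⟨7, by omega⟩
  | _, _ => False

/-- The graph `G'_F`. -/
def graphGF' (k n : ℕ) (F : Fin n → Finset (Fin k)) : SimpleGraph (GVert' k n) :=
  SimpleGraph.fromRel (GRel' k n F)

def BVert.toNat : BVert → ℕ
  | .a => 0 | .e => 1 | .b => 2 | .b' => 3 | .h => 4
  | .k => 5 | .f1 => 6 | .g1 => 7 | .f2 => 8 | .g2 => 9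

instance : DecidableEq BVert := fun x y =>
  decidable_of_iff (x.toNat = y.toNat) (by cases x <;> cases y <;> simp [BVert.toNat])

instance : Fintype BVert :=
  ⟨{.a, .e, .b, .b', .h, .k, .f1, .g1, .f2, .g2}, by intro x; cases x <;> decide⟩

theorem graphB_predominated_three_needed (S : Set BVert)
    (hdom : ∀ v : BVert, v ≠ .a → v ≠ .b → (v ∈ S ∨ ∃ u ∈ S, graphB.Adj u v)) :
    3 ≤ S.ncard := by
  have hb : ∃ x ∈ S, x = BVert.b ∨ x = BVert.b' := by
    rcases hdom .b' (by intro h; cases h) (by intro h; cases h) with h | ⟨u, hu, hadj⟩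
    · exact ⟨_, h, Or.inr rfl⟩
    · refine ⟨u, hu, ?_⟩
      cases u <;> simp [graphB, BRel] at hadj ⊢
  have hk : ∃ x ∈ S, x = BVert.h ∨ x = BVert.k ∨ x = BVert.a := by
    rcases hdom .k (by intro h; cases h) (by intro h; cases h) with h | ⟨u, hu, hadj⟩
    · exact ⟨_, h, Or.inr (Or.inl rfl)⟩
    · refine ⟨u, hu, ?_⟩
      cases u <;> simp [graphB, BRel] at hadj ⊢
  have hg : ∃ x ∈ S, x = BVert.e ∨ x = BVert.g1 ∨ x = BVert.f1 := by
    rcases hdom .g1 (by intro h; cases h) (by intro h; cases h) with h | ⟨u, hu, hadj⟩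
    · exact ⟨_, h, Or.inr (Or.inl rfl)⟩
    · refine ⟨u, hu, ?_⟩
      cases u <;> simp [graphB, BRel] at hadj ⊢
  obtain ⟨x, hxS, hx⟩ := hb
  obtain ⟨y, hyS, hy⟩ := hk
  obtain ⟨z, hzS, hz⟩ := hg
  have hsub : ({x, y, z} : Set BVert) ⊆ S := by
    intro v hv
    rcases hv with rfl | rfl | rfl <;> assumption
  have h3 : ({x, y, z} : Set BVert).ncard = 3 := by
    apply Set.ncard_eq_three.mpr
    refine ⟨x, y, z, ?_, ?_, ?_, rfl⟩ <;>
      rcases hx with rfl | rfl <;> rcases hy with rfl | rfl | rfl <;>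
        rcases hz with rfl | rfl | rfl <;> decide
  calc 3 = ({x, y, z} : Set BVert).ncard := h3.symm
    _ ≤ S.ncard := Set.ncard_le_ncard hsub S.toFinite

end CDG
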